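/- arXiv:math-ph/0506036 — 4 statements merged into one kernel-verified Lean document; each statement's English description precedes it below -/
import Mathlib

section
/- With L_m as defined from the clock and shift matrices, the commutator satisfies [L_μ, L_ν] = (N/π) sin((π/N)(μ₁ν₂ - μ₂ν₁)) L_{μ+ν}. -/
open Matrix Complex

/-- The clock matrix `S = √ω · diag(1, ω, ω², …, ω^{N-1})` with `ω = exp(2πi/N)`,
`√ω = exp(πi/N)`. -/
noncomputable def clockS (N : ℕ) : Matrix (Fin N) (Fin N) ℂ :=
  Matrix.diagonal fun k =>
    Complex.exp (Real.pi * Complex.I / N) * Complex.exp (2 * Real.pi * Complex.I / N) ^ (k : ℕ)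

/-- The shift matrix `T` with `T_{j,j+1} = 1` (j = 1,…,N-1), `T_{N,1} = -1`,
all other entries zero. -/
def shiftT (N : ℕ) : Matrix (Fin N) (Fin N) ℂ :=
  Matrix.of fun j k =>
    if (j : ℕ) + 1 = (k : ℕ) then 1
    else if (j : ℕ) = N - 1 ∧ (k : ℕ) = 0 then -1 else 0

/-- Integer power of a square matrix (negative exponents via the nonsingular inverse). -/
noncomputable def mzpow {N : ℕ} (A : Matrix (Fin N) (Fin N) ℂ) (z : ℤ) :
    Matrix (Fin N) (Fin N) ℂ :=
  if 0 ≤ z then A ^ z.toNat else A⁻¹ ^ (-z).toNat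

/-- `L_m = (iN/2π) ω^{m₁m₂/2} S^{m₁} T^{m₂}`, where `ω^{x/2} = exp(πix/N)`. -/
noncomputable def Lmat (N : ℕ) (m : ℤ × ℤ) : Matrix (Fin N) (Fin N) ℂ :=
  (Complex.I * N / (2 * Real.pi)) •
    (Complex.exp (Real.pi * Complex.I * ((m.1 * m.2 : ℤ) : ℂ) / N) •
      (mzpow (clockS N) m.1 * mzpow (shiftT N) m.2))

lemma mzpow_eq_zpow {N : ℕ} (A : Matrix (Fin N) (Fin N) ℂ) (z : ℤ) :
    mzpow A z = A ^ z := by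
  unfold mzpow
  split_ifs with h
  · rw [← zpow_natCast, Int.toNat_of_nonneg h]
  · rw [Matrix.inv_pow', ← Matrix.zpow_neg_natCast,
      Int.toNat_of_nonneg (by omega : (0:ℤ) ≤ -z), neg_neg]

lemma clockS_det_isUnit (N : ℕ) : IsUnit (clockS N).det := by
  rw [clockS, Matrix.det_diagonal, isUnit_iff_ne_zero]
  exact Finset.prod_ne_zero_iff.2 fun k _ =>
    mul_ne_zero (Complex.exp_ne_zero _) (pow_ne_zero _ (Complex.exp_ne_zero _))

lemma shiftT_mul_inv (N : ℕ) (hN : 0 < N) :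
    shiftT N * (Matrix.of fun j k : Fin N =>
      if (k : ℕ) + 1 = (j : ℕ) then 1
      else if (k : ℕ) = N - 1 ∧ (j : ℕ) = 0 then (-1 : ℂ) else 0) = 1 := by
  ext j k
  rw [Matrix.mul_apply]
  rcases lt_or_ge (j : ℕ) (N - 1) with hj | hj
  · have hjN : (j : ℕ) + 1 < N := by omega
    rw [Finset.sum_eq_single (⟨(j : ℕ) + 1, hjN⟩ : Fin N)]
    · have hT : shiftT N j ⟨(j:ℕ)+1, hjN⟩ = 1 := by simp [shiftT]
      rw [hT, one_mul, Matrix.one_apply, Matrix.of_apply]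
      by_cases hk : (k:ℕ) = (j:ℕ)
      · rw [if_pos (by simpa using hk), if_pos (Fin.ext hk.symm)]
      · rw [if_neg (by simpa using fun h : (k:ℕ)+1 = (j:ℕ)+1 => hk (by omega)),
          if_neg (by simp), if_neg (fun h => hk (congrArg Fin.val h).symm)]
    · intro l _ hl
      have h1 : ¬((j:ℕ) + 1 = (l:ℕ)) := fun h => hl (Fin.ext (by simpa using h.symm))
      have h2 : ¬((j:ℕ) = N - 1) := by omega
      have hT : shiftT N j l = 0 := by simp [shiftT, h1, h2]
      rw [hT, zero_mul]
    · simp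
  · have hj' : (j : ℕ) = N - 1 := by have := j.isLt; omega
    rw [Finset.sum_eq_single (⟨0, hN⟩ : Fin N)]
    · have hT : shiftT N j ⟨0, hN⟩ = -1 := by
        simp [shiftT, hj', (by omega : ¬((j:ℕ) + 1 = (0:ℕ)))]
      rw [hT, Matrix.one_apply, Matrix.of_apply]
      by_cases hk : (k:ℕ) = N - 1
      · rw [if_neg (by simp), if_pos ⟨hk, rfl⟩, if_pos (Fin.ext (by omega))]
        ring
      · rw [if_neg (by simp), if_neg (by simp [hk]),
          if_neg (fun h => hk (by rw [← congrArg Fin.val h]; exact hj')), mul_zero]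
    · intro l _ hl
      have h2 : ¬((l:ℕ) = 0) := fun h => hl (Fin.ext (by simpa using h))
      have h1 : ¬((j:ℕ) + 1 = (l:ℕ)) := by have := l.isLt; omega
      have hT : shiftT N j l = 0 := by simp [shiftT, h1, h2]
      rw [hT, zero_mul]
    · simp

lemma shiftT_det_isUnit (N : ℕ) (hN : 0 < N) : IsUnit (shiftT N).det :=
  Matrix.isUnit_det_of_right_inverse (shiftT_mul_inv N hN)

noncomputable def ee (N : ℕ) (x : ℂ) : ℂ := Complex.exp (2 * Real.pi * Complex.I * x / N)

lemma ee_mul (N : ℕ) (x y : ℂ) : ee N x * ee N y = ee N (x + y) := by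
  rw [ee, ee, ee, ← Complex.exp_add]; congr 1; ring

lemma ee_zero (N : ℕ) : ee N 0 = 1 := by simp [ee]

lemma comm_base (N : ℕ) (hN : 0 < N) :
    shiftT N * clockS N = ee N 1 • (clockS N * shiftT N) := by
  have hw : Complex.exp (2*Real.pi*Complex.I/N) ^ N = 1 := by
    rw [← Complex.exp_nat_mul]
    have h0 : (N:ℂ) ≠ 0 := Nat.cast_ne_zero.2 hN.ne'
    have : (N:ℂ) * (2*Real.pi*Complex.I/N) = 2*Real.pi*Complex.I := by field_simp
    rw [this, Complex.exp_two_pi_mul_I]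
  ext j k
  rw [clockS, Matrix.mul_diagonal, Matrix.smul_apply, Matrix.diagonal_mul]
  set c := Complex.exp (Real.pi * Complex.I / N) with hc
  set w := Complex.exp (2*Real.pi*Complex.I/N) with hwdef
  have hee : ee N 1 = w := by rw [ee]; congr 1; ring
  rw [smul_eq_mul, hee]
  by_cases h1 : (j:ℕ) + 1 = (k:ℕ)
  · have hT : shiftT N j k = 1 := by simp [shiftT, h1]
    rw [hT, ← h1, pow_succ]; ring
  · by_cases h2 : (j:ℕ) = N - 1 ∧ (k:ℕ) = 0
    · have hT : shiftT N j k = -1 := by simp [shiftT, h1, h2]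
      rw [hT, h2.1, h2.2, pow_zero]
      have : w * w ^ (N - 1) = 1 := by
        rw [← pow_succ']
        have : N - 1 + 1 = N := by omega
        rw [this, hw]
      calc -1 * (c * 1) = -(c * (w * w ^ (N-1))) := by rw [this]; ring
        _ = w * (c * w ^ (N-1) * -1) := by ring
    · have hT : shiftT N j k = 0 := by simp [shiftT, h1, h2]
      rw [hT]; ring

lemma comm_Sinv (N : ℕ) (hN : 0 < N) :
    shiftT N * (clockS N)⁻¹ = ee N (-1) • ((clockS N)⁻¹ * shiftT N) := by
  have hS := clockS_det_isUnit N
  have h1 : (clockS N)⁻¹ * (shiftT N * clockS N) * (clockS N)⁻¹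
      = (clockS N)⁻¹ * (ee N 1 • (clockS N * shiftT N)) * (clockS N)⁻¹ := by
    rw [comm_base N hN]
  have h2 : (clockS N)⁻¹ * shiftT N = ee N 1 • (shiftT N * (clockS N)⁻¹) := by
    calc (clockS N)⁻¹ * shiftT N
        = (clockS N)⁻¹ * shiftT N * (clockS N * (clockS N)⁻¹) := by
          rw [Matrix.mul_nonsing_inv _ hS, Matrix.mul_one]
      _ = (clockS N)⁻¹ * (shiftT N * clockS N) * (clockS N)⁻¹ := by
          simp only [Matrix.mul_assoc]
      _ = (clockS N)⁻¹ * (ee N 1 • (clockS N * shiftT N)) * (clockS N)⁻¹ := h1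
      _ = ee N 1 • ((clockS N)⁻¹ * clockS N * (shiftT N * (clockS N)⁻¹)) := by
          simp only [Matrix.mul_smul, Matrix.smul_mul, Matrix.mul_assoc]
      _ = ee N 1 • (shiftT N * (clockS N)⁻¹) := by
          rw [Matrix.nonsing_inv_mul _ hS, Matrix.one_mul]
  calc shiftT N * (clockS N)⁻¹
      = ee N (-1) • (ee N 1 • (shiftT N * (clockS N)⁻¹)) := by
        rw [smul_smul, ee_mul]; norm_num [ee_zero]
    _ = ee N (-1) • ((clockS N)⁻¹ * shiftT N) := by rw [← h2]

lemma comm1 (N : ℕ) (hN : 0 < N) (a : ℤ) :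
    shiftT N * clockS N ^ a = ee N a • (clockS N ^ a * shiftT N) := by
  have hS := clockS_det_isUnit N
  induction a using Int.induction_on with
  | zero => simp [ee_zero]
  | succ a ih =>
      rw [Matrix.zpow_add_one hS, ← Matrix.mul_assoc, ih]
      rw [Matrix.smul_mul, Matrix.mul_assoc, comm_base N hN, Matrix.mul_smul,
        smul_smul, ee_mul, ← Matrix.mul_assoc]
      push_cast
      ring_nf
  | pred a ih =>
      rw [Matrix.zpow_sub_one hS, ← Matrix.mul_assoc, ih]
      rw [Matrix.smul_mul, Matrix.mul_assoc, comm_Sinv N hN, Matrix.mul_smul,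
        smul_smul, ee_mul, ← Matrix.mul_assoc]
      push_cast
      ring_nf

lemma comm_Tinv (N : ℕ) (hN : 0 < N) (a : ℤ) :
    (shiftT N)⁻¹ * clockS N ^ a = ee N (-a) • (clockS N ^ a * (shiftT N)⁻¹) := by
  have hT := shiftT_det_isUnit N hN
  have h2 : clockS N ^ a * (shiftT N)⁻¹ = ee N a • ((shiftT N)⁻¹ * clockS N ^ a) := by
    calc clockS N ^ a * (shiftT N)⁻¹
        = (shiftT N)⁻¹ * (shiftT N * clockS N ^ a) * (shiftT N)⁻¹ := by
          rw [← Matrix.mul_assoc, Matrix.nonsing_inv_mul _ hT, Matrix.one_mul]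
      _ = (shiftT N)⁻¹ * (ee N a • (clockS N ^ a * shiftT N)) * (shiftT N)⁻¹ := by
          rw [comm1 N hN]
      _ = ee N a • ((shiftT N)⁻¹ * clockS N ^ a * (shiftT N * (shiftT N)⁻¹)) := by
          simp only [Matrix.mul_smul, Matrix.smul_mul, Matrix.mul_assoc]
      _ = ee N a • ((shiftT N)⁻¹ * clockS N ^ a) := by
          rw [Matrix.mul_nonsing_inv _ hT, Matrix.mul_one]
  calc (shiftT N)⁻¹ * clockS N ^ a
      = ee N (-a) • (ee N a • ((shiftT N)⁻¹ * clockS N ^ a)) := by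
        rw [smul_smul, ee_mul]; norm_num [ee_zero]
    _ = ee N (-a) • (clockS N ^ a * (shiftT N)⁻¹) := by rw [← h2]

lemma comm2 (N : ℕ) (hN : 0 < N) (a b : ℤ) :
    shiftT N ^ b * clockS N ^ a = ee N (a * b) • (clockS N ^ a * shiftT N ^ b) := by
  have hT := shiftT_det_isUnit N hN
  induction b using Int.induction_on with
  | zero => simp [ee_zero]
  | succ b ih =>
      rw [Matrix.zpow_add_one hT, Matrix.mul_assoc, comm1 N hN,
        Matrix.mul_smul, ← Matrix.mul_assoc, ih, Matrix.smul_mul, smul_smul,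
        ee_mul, Matrix.mul_assoc]
      push_cast
      ring_nf
  | pred b ih =>
      rw [Matrix.zpow_sub_one hT, Matrix.mul_assoc, comm_Tinv N hN,
        Matrix.mul_smul, ← Matrix.mul_assoc, ih, Matrix.smul_mul, smul_smul,
        ee_mul, Matrix.mul_assoc]
      push_cast
      ring_nf

lemma scalar_combine (N : ℕ) (μ ν : ℤ × ℤ) :
    Complex.exp (Real.pi * Complex.I * ((μ.1 * μ.2 : ℤ) : ℂ) / N) *
      Complex.exp (Real.pi * Complex.I * ((ν.1 * ν.2 : ℤ) : ℂ) / N) *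
      ee N ((ν.1 * μ.2 : ℤ) : ℂ) =
    Complex.exp (Real.pi * Complex.I * ((μ.2 * ν.1 - μ.1 * ν.2 : ℤ) : ℂ) / N) *
      Complex.exp (Real.pi * Complex.I * (((μ + ν).1 * (μ + ν).2 : ℤ) : ℂ) / N) := by
  rw [ee, ← Complex.exp_add, ← Complex.exp_add, ← Complex.exp_add]
  congr 1
  push_cast [Prod.fst_add, Prod.snd_add]
  ring

lemma Lmat_mul (N : ℕ) (hN : 0 < N) (μ ν : ℤ × ℤ) :
    Lmat N μ * Lmat N ν =
      ((Complex.I * N / (2 * Real.pi)) *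
        Complex.exp (Real.pi * Complex.I * ((μ.2 * ν.1 - μ.1 * ν.2 : ℤ) : ℂ) / N)) •
        Lmat N (μ + ν) := by
  have hS := clockS_det_isUnit N
  have hT := shiftT_det_isUnit N hN
  have assoc : clockS N ^ μ.1 * shiftT N ^ μ.2 * (clockS N ^ ν.1 * shiftT N ^ ν.2)
      = ee N ((ν.1 * μ.2 : ℤ) : ℂ) •
        (clockS N ^ ((μ + ν).1) * shiftT N ^ ((μ + ν).2)) := by
    calc clockS N ^ μ.1 * shiftT N ^ μ.2 * (clockS N ^ ν.1 * shiftT N ^ ν.2)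
        = clockS N ^ μ.1 * (shiftT N ^ μ.2 * clockS N ^ ν.1) * shiftT N ^ ν.2 := by
          simp only [Matrix.mul_assoc]
      _ = clockS N ^ μ.1 * (ee N ((ν.1 * μ.2 : ℤ) : ℂ) •
            (clockS N ^ ν.1 * shiftT N ^ μ.2)) * shiftT N ^ ν.2 := by
          rw [comm2 N hN]; push_cast; ring_nf
      _ = ee N ((ν.1 * μ.2 : ℤ) : ℂ) •
            (clockS N ^ μ.1 * clockS N ^ ν.1 * (shiftT N ^ μ.2 * shiftT N ^ ν.2)) := by
          simp only [Matrix.mul_smul, Matrix.smul_mul, Matrix.mul_assoc]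
      _ = _ := by
          rw [← Matrix.zpow_add hS, ← Matrix.zpow_add hT, Prod.fst_add, Prod.snd_add]
  simp only [Lmat, mzpow_eq_zpow, Matrix.smul_mul, Matrix.mul_smul, smul_smul]
  rw [assoc, smul_smul]
  congr 1
  have hcomb := scalar_combine N μ ν
  linear_combination (Complex.I * (N:ℂ) / (2 * (Real.pi:ℂ)))^2 * hcomb

/-- `[L_μ, L_ν] = (N/π) sin((π/N)(μ₁ν₂ - μ₂ν₁)) L_{μ+ν}`. -/
theorem Lmat_commutator (N : ℕ) (hN : 2 ≤ N) (μ ν : ℤ × ℤ) :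
    Lmat N μ * Lmat N ν - Lmat N ν * Lmat N μ =
      (((N : ℂ) / (Real.pi : ℂ)) *
        Complex.sin ((Real.pi : ℂ) / N * ((μ.1 * ν.2 - μ.2 * ν.1 : ℤ) : ℂ))) •
        Lmat N (μ + ν) := by
  have hN0 : 0 < N := by omega
  rw [Lmat_mul N hN0 μ ν, Lmat_mul N hN0 ν μ, (show ν + μ = μ + ν from add_comm ν μ),
    ← sub_smul]
  congr 1
  set x : ℂ := ((μ.1 * ν.2 - μ.2 * ν.1 : ℤ) : ℂ) with hx
  have h1 : Complex.exp (Real.pi * Complex.I * ((μ.2 * ν.1 - μ.1 * ν.2 : ℤ) : ℂ) / N)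
      = Complex.exp (-((Real.pi : ℂ) / N * x) * Complex.I) := by
    congr 1; rw [hx]; push_cast; ring
  have h2 : Complex.exp (Real.pi * Complex.I * ((ν.2 * μ.1 - ν.1 * μ.2 : ℤ) : ℂ) / N)
      = Complex.exp (((Real.pi : ℂ) / N * x) * Complex.I) := by
    congr 1; rw [hx]; push_cast; ring
  rw [h1, h2, Complex.sin]
  have hπ : (Real.pi : ℂ) ≠ 0 := by exact_mod_cast Real.pi_ne_zero
  field_simp
end

section
/- With L_m as defined from the clock and shift matrices, Tr(L_{Nr}) = (-1)^{r₁ + r₂ + N r₁ r₂} · iN²/(2π) for all r ∈ ℤ×ℤ. -/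
open Matrix Complex

lemma clockS_pow_card (N : ℕ) (hN : 1 ≤ N) : clockS N ^ N = -1 := by
  have hNC : (N : ℂ) ≠ 0 := Nat.cast_ne_zero.mpr (by omega)
  rw [clockS, Matrix.diagonal_pow]
  have h1 : Complex.exp (Real.pi * Complex.I / N) ^ N = -1 := by
    rw [← Complex.exp_nat_mul]
    rw [show (N : ℂ) * (Real.pi * Complex.I / N) = Real.pi * Complex.I by
      field_simp]
    exact Complex.exp_pi_mul_I
  have h2 : Complex.exp (2 * Real.pi * Complex.I / N) ^ N = 1 := by
    rw [← Complex.exp_nat_mul]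
    rw [show (N : ℂ) * (2 * Real.pi * Complex.I / N) = 2 * Real.pi * Complex.I by
      field_simp]
    exact Complex.exp_two_pi_mul_I
  have hfun : ((fun k : Fin N => Complex.exp (Real.pi * Complex.I / N) *
      Complex.exp (2 * Real.pi * Complex.I / N) ^ (k : ℕ)) ^ N)
      = fun _ : Fin N => (-1 : ℂ) := by
    funext k
    rw [Pi.pow_apply, mul_pow, h1, ← pow_mul, mul_comm (k : ℕ) N, pow_mul, h2,
      one_pow, mul_one]
  rw [hfun, show (fun _ : Fin N => (-1 : ℂ)) = fun _ : Fin N => -(1 : ℂ) from rfl,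
    ← Matrix.diagonal_neg, Matrix.diagonal_one]

lemma shiftT_pow_apply (N : ℕ) (k : ℕ) (hk : k ≤ N) (j l : Fin N) :
    (shiftT N ^ k) j l =
      if (j : ℕ) + k = (l : ℕ) then 1
      else if (j : ℕ) + k = (l : ℕ) + N then -1 else 0 := by
  induction k generalizing l with
  | zero =>
      have hj := j.isLt
      have hl := l.isLt
      rw [pow_zero, Matrix.one_apply]
      by_cases h : j = l
      · subst h; simp
      · have : ¬ ((j : ℕ) + 0 = (l : ℕ)) := by
          intro hc; exact h (Fin.ext (by omega))
        rw [if_neg h, if_neg this, if_neg (by omega)]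
  | succ k ih =>
      have hj := j.isLt
      have hl := l.isLt
      rw [pow_succ, Matrix.mul_apply]
      rcases lt_or_ge ((j : ℕ) + k) N with h | h
      · have hm0v : ((⟨(j : ℕ) + k, h⟩ : Fin N) : ℕ) = (j : ℕ) + k := rfl
        rw [Fintype.sum_eq_single (⟨(j : ℕ) + k, h⟩ : Fin N) ?_]
        · rw [ih (by omega)]
          simp only [hm0v]
          rw [if_pos trivial, one_mul, shiftT, Matrix.of_apply]
          simp only [hm0v]
          by_cases h1 : (j : ℕ) + k + 1 = (l : ℕ)
          · rw [if_pos h1, if_pos (show (j : ℕ) + (k + 1) = (l : ℕ) by omega)]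
          · rw [if_neg h1]
            by_cases h2 : (j : ℕ) + k = N - 1 ∧ (l : ℕ) = 0
            · rw [if_pos h2, if_neg (show ¬((j : ℕ) + (k + 1) = (l : ℕ)) by omega),
                if_pos (show (j : ℕ) + (k + 1) = (l : ℕ) + N by omega)]
            · rw [if_neg h2, if_neg (show ¬((j : ℕ) + (k + 1) = (l : ℕ)) by omega),
                if_neg (show ¬((j : ℕ) + (k + 1) = (l : ℕ) + N) by omega)]
        · intro m hm
          have hmv : (m : ℕ) ≠ (j : ℕ) + k := fun hc =>
            hm (Fin.ext (hc.trans hm0v.symm))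
          have hm2 := m.isLt
          rw [ih (by omega),
            if_neg (show ¬((j : ℕ) + k = (m : ℕ)) from fun hc => hmv hc.symm),
            if_neg (show ¬((j : ℕ) + k = (m : ℕ) + N) by omega), zero_mul]
      · have hlt : (j : ℕ) + k - N < N := by omega
        have hm0v : ((⟨(j : ℕ) + k - N, hlt⟩ : Fin N) : ℕ) = (j : ℕ) + k - N := rfl
        rw [Fintype.sum_eq_single (⟨(j : ℕ) + k - N, hlt⟩ : Fin N) ?_]
        · rw [ih (by omega)]
          simp only [hm0v]
          rw [if_neg (show ¬((j : ℕ) + k = (j : ℕ) + k - N) by omega),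
            if_pos (show (j : ℕ) + k = (j : ℕ) + k - N + N by omega),
            shiftT, Matrix.of_apply]
          simp only [hm0v]
          have hno : ¬((j : ℕ) + k - N = N - 1 ∧ (l : ℕ) = 0) := by omega
          by_cases h1 : (j : ℕ) + k - N + 1 = (l : ℕ)
          · rw [if_pos h1, if_neg (show ¬((j : ℕ) + (k + 1) = (l : ℕ)) by omega),
              if_pos (show (j : ℕ) + (k + 1) = (l : ℕ) + N by omega)]
            norm_num
          · rw [if_neg h1, if_neg hno, if_neg (show ¬((j : ℕ) + (k + 1) = (l : ℕ)) by omega),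
              if_neg (show ¬((j : ℕ) + (k + 1) = (l : ℕ) + N) by omega)]
            norm_num
        · intro m hm
          have hmv : (m : ℕ) ≠ (j : ℕ) + k - N := fun hc =>
            hm (Fin.ext (hc.trans hm0v.symm))
          have hm2 := m.isLt
          rw [ih (by omega),
            if_neg (show ¬((j : ℕ) + k = (m : ℕ)) by omega),
            if_neg (show ¬((j : ℕ) + k = (m : ℕ) + N) by omega), zero_mul]

lemma shiftT_pow_card (N : ℕ) (hN : 1 ≤ N) : shiftT N ^ N = -1 := by
  ext j l
  rw [shiftT_pow_apply N N le_rfl, Matrix.neg_apply, Matrix.one_apply]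
  have hl := l.isLt
  by_cases h : j = l
  · subst h
    rw [if_neg (by omega), if_pos (by omega), if_pos rfl]
  · have : (j : ℕ) ≠ (l : ℕ) := fun hc => h (Fin.ext hc)
    rw [if_neg (by omega), if_neg (by omega), if_neg h, neg_zero]

lemma mzpow_nmul {N : ℕ} {A : Matrix (Fin N) (Fin N) ℂ} (hN : 1 ≤ N)
    (hA : A ^ N = -1) (r : ℤ) :
    mzpow A ((N : ℤ) * r) = ((-1 : ℂ) ^ r) • (1 : Matrix (Fin N) (Fin N) ℂ) := by
  have hNZ : (0 : ℤ) < (N : ℤ) := by exact_mod_cast hN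
  have hinv : A * (-(A ^ (N - 1))) = 1 := by
    rw [mul_neg, ← pow_succ', show N - 1 + 1 = N by omega, hA, neg_neg]
  have hAinv : A⁻¹ = -(A ^ (N - 1)) := Matrix.inv_eq_right_inv hinv
  have hAinvN : A⁻¹ ^ N = -1 := by
    rw [hAinv, neg_pow, ← pow_mul, mul_comm (N - 1) N, pow_mul, hA, ← pow_add]
    have : Odd (N + (N - 1)) := by
      refine ⟨N - 1, by omega⟩
    rw [this.neg_one_pow]
  have key : ∀ (B : Matrix (Fin N) (Fin N) ℂ) (n : ℕ), B ^ N = -1 →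
      B ^ (N * n) = ((-1 : ℂ) ^ n) • 1 := by
    intro B n hB
    rw [pow_mul, hB, ← neg_one_smul ℂ (1 : Matrix (Fin N) (Fin N) ℂ), smul_pow,
      one_pow]
  rcases le_or_gt 0 r with hr | hr
  · obtain ⟨n, rfl⟩ := Int.eq_ofNat_of_zero_le hr
    rw [mzpow, if_pos (by positivity),
      show ((N : ℤ) * (n : ℤ)).toNat = N * n by
        rw [← Nat.cast_mul, Int.toNat_natCast],
      key A n hA, zpow_natCast]
  · obtain ⟨n, rfl⟩ : ∃ n : ℕ, r = -(n : ℤ) := ⟨r.natAbs, by omega⟩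
    rw [mzpow, if_neg (by nlinarith),
      show (-((N : ℤ) * -(n : ℤ))).toNat = N * n by
        rw [show -((N : ℤ) * -(n : ℤ)) = ((N * n : ℕ) : ℤ) by push_cast; ring,
          Int.toNat_natCast],
      key A⁻¹ n hAinvN, _root_.zpow_neg, zpow_natCast, ← inv_pow, inv_neg, inv_one]

/-- `Tr(L_{Nr}) = (-1)^{r₁ + r₂ + N r₁ r₂} · iN²/(2π)`. -/
theorem Lmat_trace_at_Nr (N : ℕ) (hN : 2 ≤ N) (r : ℤ × ℤ) :
    Matrix.trace (Lmat N ((N : ℤ) * r.1, (N : ℤ) * r.2)) =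
      ((-1 : ℂ) ^ (r.1 + r.2 + (N : ℤ) * r.1 * r.2)) *
        (Complex.I * (N : ℂ) ^ 2 / (2 * Real.pi)) := by
  have hN1 : 1 ≤ N := by omega
  have hNC : (N : ℂ) ≠ 0 := Nat.cast_ne_zero.mpr (by omega)
  rw [Lmat]
  dsimp only
  rw [mzpow_nmul hN1 (clockS_pow_card N hN1), mzpow_nmul hN1 (shiftT_pow_card N hN1),
    smul_mul_smul_comm, one_mul]
  have hexp : Complex.exp (Real.pi * Complex.I * (((N : ℤ) * r.1 * ((N : ℤ) * r.2) : ℤ) : ℂ) / N)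
      = (-1 : ℂ) ^ ((N : ℤ) * r.1 * r.2) := by
    have harg : Real.pi * Complex.I * (((N : ℤ) * r.1 * ((N : ℤ) * r.2) : ℤ) : ℂ) / N
        = (((N : ℤ) * r.1 * r.2 : ℤ) : ℂ) * (Real.pi * Complex.I) := by
      push_cast
      field_simp
    rw [harg, Complex.exp_int_mul, Complex.exp_pi_mul_I]
  rw [hexp, smul_smul, smul_smul, Matrix.trace_smul, Matrix.trace_one, smul_eq_mul]
  have hcard : (Fintype.card (Fin N) : ℂ) = (N : ℂ) := by simp
  rw [hcard]
  rw [zpow_add₀ (by norm_num : (-1 : ℂ) ≠ 0), zpow_add₀ (by norm_num : (-1 : ℂ) ≠ 0)]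
  ring
end

section
/- The bracket {E_m, E_n} := (N/π) sin((π/N)(m₁n₂ - m₂n₁)) E_{m+n} on the free complex vector space spanned by {E_m : m ∈ ℤ×ℤ} satisfies the Jacobi identity and antisymmetry, hence defines a Lie algebra structure. -/
noncomputable def trigBracket (N : ℕ) (x y : (ℤ × ℤ) →₀ ℂ) : (ℤ × ℤ) →₀ ℂ :=
  x.sum fun m a => y.sum fun n b =>
    Finsupp.single (m + n)
      (a * b * (((N : ℂ) / (Real.pi : ℂ)) *
        Complex.sin ((Real.pi : ℂ) / N * ((m.1 * n.2 - m.2 * n.1 : ℤ) : ℂ))))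

namespace TrigAux

noncomputable def c (N : ℕ) (m n : ℤ × ℤ) : ℂ :=
  ((N : ℂ) / (Real.pi : ℂ)) *
    Complex.sin ((Real.pi : ℂ) / N * ((m.1 * n.2 - m.2 * n.1 : ℤ) : ℂ))

lemma c_antisymm (N : ℕ) (m n : ℤ × ℤ) : c N n m = - c N m n := by
  unfold c
  have h : ((n.1 * m.2 - n.2 * m.1 : ℤ) : ℂ) = -((m.1 * n.2 - m.2 * n.1 : ℤ) : ℂ) := by
    push_cast; ring
  rw [h, mul_neg, Complex.sin_neg, mul_neg]

lemma sin_cyc (A B C : ℂ) :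
    Complex.sin A * Complex.sin (B - C) + Complex.sin B * Complex.sin (C - A) +
      Complex.sin C * Complex.sin (A - B) = 0 := by
  simp [Complex.sin_sub]; ring

lemma c_jacobi (N : ℕ) (m n p : ℤ × ℤ) :
    c N m n * c N (m + n) p + c N n p * c N (n + p) m + c N p m * c N (p + m) n = 0 := by
  unfold c
  set K := ((N : ℂ) / (Real.pi : ℂ)) with hK
  set α := ((Real.pi : ℂ) / N) with hα
  set A := α * ((m.1 * n.2 - m.2 * n.1 : ℤ) : ℂ) with hA
  set B := α * ((n.1 * p.2 - n.2 * p.1 : ℤ) : ℂ) with hB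
  set C := α * ((p.1 * m.2 - p.2 * m.1 : ℤ) : ℂ) with hC
  have h1 : α * (((m + n).1 * p.2 - (m + n).2 * p.1 : ℤ) : ℂ) = B - C := by
    rw [hB, hC]; push_cast [Prod.fst_add, Prod.snd_add]; ring
  have h2 : α * (((n + p).1 * m.2 - (n + p).2 * m.1 : ℤ) : ℂ) = C - A := by
    rw [hC, hA]; push_cast [Prod.fst_add, Prod.snd_add]; ring
  have h3 : α * (((p + m).1 * n.2 - (p + m).2 * n.1 : ℤ) : ℂ) = A - B := by
    rw [hA, hB]; push_cast [Prod.fst_add, Prod.snd_add]; ring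
  rw [h1, h2, h3]
  linear_combination (K * K) * sin_cyc A B C

lemma tb_single_single (N : ℕ) (m n : ℤ × ℤ) (a b : ℂ) :
    trigBracket N (Finsupp.single m a) (Finsupp.single n b) =
      Finsupp.single (m + n) (a * b * c N m n) := by
  unfold trigBracket c
  rw [Finsupp.sum_single_index, Finsupp.sum_single_index] <;> simp

lemma tb_zero_left (N : ℕ) (y : (ℤ × ℤ) →₀ ℂ) : trigBracket N 0 y = 0 := by
  simp [trigBracket]

lemma tb_zero_right (N : ℕ) (x : (ℤ × ℤ) →₀ ℂ) : trigBracket N x 0 = 0 := by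
  simp [trigBracket]

lemma tb_add_left (N : ℕ) (x x' y : (ℤ × ℤ) →₀ ℂ) :
    trigBracket N (x + x') y = trigBracket N x y + trigBracket N x' y := by
  unfold trigBracket
  rw [Finsupp.sum_add_index']
  · intro m; simp
  · intro m a a'
    rw [← Finsupp.sum_add]
    apply Finsupp.sum_congr
    intro n _
    rw [← Finsupp.single_add]
    congr 1; ring

lemma tb_add_right (N : ℕ) (x y y' : (ℤ × ℤ) →₀ ℂ) :
    trigBracket N x (y + y') = trigBracket N x y + trigBracket N x y' := by
  unfold trigBracket
  rw [← Finsupp.sum_add]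
  apply Finsupp.sum_congr
  intro m _
  rw [Finsupp.sum_add_index']
  · intro n; simp
  · intro n b b'
    rw [← Finsupp.single_add]
    congr 1; ring

end TrigAux

open TrigAux in
/-- The trigonometric bracket is antisymmetric and satisfies the Jacobi identity,
hence defines a Lie algebra structure on the free vector space spanned by the `E_m`. -/
theorem trigBracket_antisymm_jacobi (N : ℕ) (hN : 2 ≤ N) :
    (∀ x y : (ℤ × ℤ) →₀ ℂ, trigBracket N x y = -trigBracket N y x) ∧
    (∀ x y z : (ℤ × ℤ) →₀ ℂ,
      trigBracket N (trigBracket N x y) z + trigBracket N (trigBracket N y z) x +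
        trigBracket N (trigBracket N z x) y = 0) := by
  constructor
  · intro x y
    induction x using Finsupp.induction_linear with
    | zero => simp [tb_zero_left, tb_zero_right]
    | add f g hf hg => rw [tb_add_left, tb_add_right, hf, hg]; abel
    | single m a =>
      induction y using Finsupp.induction_linear with
      | zero => simp [tb_zero_left, tb_zero_right]
      | add f g hf hg => rw [tb_add_left, tb_add_right, hf, hg]; abel
      | single n b =>
        rw [tb_single_single, tb_single_single, c_antisymm, add_comm n m]
        rw [← Finsupp.single_neg]
        congr 1; ring
  · intro x y z
    induction x using Finsupp.induction_linear with
    | zero => simp [tb_zero_left, tb_zero_right]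
    | add f g hf hg =>
      simp only [tb_add_left, tb_add_right]
      rw [← add_zero (0 : (ℤ × ℤ) →₀ ℂ)]; nth_rewrite 2 [← hg]; rw [← hf]
      abel
    | single m a =>
      induction y using Finsupp.induction_linear with
      | zero => simp [tb_zero_left, tb_zero_right]
      | add f g hf hg =>
        simp only [tb_add_left, tb_add_right]
        rw [← add_zero (0 : (ℤ × ℤ) →₀ ℂ)]; nth_rewrite 2 [← hg]; rw [← hf]
        abel
      | single n b =>
        induction z using Finsupp.induction_linear with
        | zero => simp [tb_zero_left, tb_zero_right]
        | add f g hf hg =>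
          simp only [tb_add_left, tb_add_right]
          rw [← add_zero (0 : (ℤ × ℤ) →₀ ℂ)]; nth_rewrite 2 [← hg]; rw [← hf]
          abel
        | single p d =>
          rw [tb_single_single, tb_single_single, tb_single_single,
            tb_single_single, tb_single_single, tb_single_single]
          rw [show n + p + m = m + n + p from by abel,
            show p + m + n = m + n + p from by abel]
          rw [← Finsupp.single_add, ← Finsupp.single_add]
          rw [Finsupp.single_eq_zero]
          linear_combination (a * b * d) * c_jacobi N m n p
end

section
/- If θ(w,z,p,q) = (π/2)cos(p+q) - w sin q - ∫₀^z sin(ζ cos q + p) dζ, then under the substitution u = sin q, v = sin(z cos q + p), the associated heavenly metric ds² = -cos q dw dq + cos(z cos q + p)(z sin q dq - dp)dz - (1/(cos q cos(z cos q + p)))[cos²q dq² + cos²(z cos q + p)(z sin q dq - dp)²] transforms into the pp-wave form ds² = -dw du + dv dz - (1/√((1-u²)(1-v²)))(du² + dv²). -/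
/-- Under `u = sin q`, `v = sin(z cos q + p)` (with `du = cos q dq`,
`dv = cos(z cos q + p)(cos q dz - z sin q dq + dp)`), the heavenly metric
`ds² = -cos q dw dq + cos(z cos q + p)(z sin q dq - dp)dz
  - (1/(cos q cos(z cos q + p)))[cos²q dq² + cos²(z cos q + p)(z sin q dq - dp)²]`
takes the pp-wave form
`ds² = -dw du + dv dz - (1/√((1-u²)(1-v²)))(du² + dv²)`. -/
theorem heavenly_metric_to_pp_wave (w z q p dw dz dq dp u v du dv : ℝ)
    (hq : Real.cos q > 0) (hv : Real.cos (z * Real.cos q + p) > 0)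
    (hu : u = Real.sin q) (hvv : v = Real.sin (z * Real.cos q + p))
    (hdu : du = Real.cos q * dq)
    (hdv : dv = Real.cos (z * Real.cos q + p) *
      (Real.cos q * dz - z * Real.sin q * dq + dp)) :
    -Real.cos q * dw * dq +
        Real.cos (z * Real.cos q + p) * (z * Real.sin q * dq - dp) * dz -
        (1 / (Real.cos q * Real.cos (z * Real.cos q + p))) *
          (Real.cos q ^ 2 * dq ^ 2 +
            Real.cos (z * Real.cos q + p) ^ 2 * (z * Real.sin q * dq - dp) ^ 2) =
      -dw * du + dv * dz -
        (1 / Real.sqrt ((1 - u ^ 2) * (1 - v ^ 2))) * (du ^ 2 + dv ^ 2) := by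
  have h1 : (1 - u ^ 2) = Real.cos q ^ 2 := by
    rw [hu]; have := Real.sin_sq_add_cos_sq q; nlinarith
  have h2 : (1 - v ^ 2) = Real.cos (z * Real.cos q + p) ^ 2 := by
    rw [hvv]; have := Real.sin_sq_add_cos_sq (z * Real.cos q + p); nlinarith
  have hs : Real.sqrt ((1 - u ^ 2) * (1 - v ^ 2))
      = Real.cos q * Real.cos (z * Real.cos q + p) := by
    rw [h1, h2, ← mul_pow, Real.sqrt_sq (by positivity)]
  rw [hs, hdu, hdv]
  have hq' := hq.ne'
  have hv' := hv.ne'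
  field_simp
  ring_nf
  field_simp
  ring
end
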